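/- arXiv:2212.10034 — 2 statements merged into one kernel-verified Lean document; each statement's English description precedes it below -/
import Mathlib

section
/- Let v : ℝ → ℝ be a continuous, positive, sub-multiplicative function (v(x+y) ≤ v(x)v(y) for all x, y) with inf_ℝ v > 0, and suppose x ↦ e^{-|x|} v(x) is in L¹(ℝ). Then x ↦ e^{-|x|} v(x) is in L^p(ℝ) for every 2 ≤ p ≤ ∞. -/
open MeasureTheory ENNReal

theorem stmt5 (v : ℝ → ℝ) (hc : Continuous v) (hpos : ∀ x, 0 < v x)
    (hsub : ∀ x y, v (x + y) ≤ v x * v y)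
    (hinf : ∃ m : ℝ, 0 < m ∧ ∀ x, m ≤ v x)
    (hL1 : Integrable (fun x => Real.exp (-|x|) * v x) volume) :
    ∀ p : ℝ≥0∞, 2 ≤ p →
      eLpNorm (fun x => Real.exp (-|x|) * v x) p volume < ⊤ := by
  set h : ℝ → ℝ := fun x => Real.exp (-|x|) * v x with hh
  have hcont : Continuous h := (Real.continuous_exp.comp continuous_abs.neg).mul hc
  have hnn : ∀ x, 0 ≤ h x := fun x => mul_nonneg (Real.exp_pos _).le (hpos x).le
  -- bound of v on [0,1]
  obtain ⟨t0, ht0, hC⟩ :=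
    (isCompact_Icc (a := (0:ℝ)) (b := 1)).exists_isMaxOn ⟨0, by norm_num⟩ hc.continuousOn
  have hC : ∀ t ∈ Set.Icc (0:ℝ) 1, v t ≤ v t0 := fun t ht => hC ht
  set C : ℝ := v t0 with hCdef
  have hCpos : 0 < C := hpos t0
  set I : ℝ := ∫ u, h u with hI
  have hInn : 0 ≤ I := integral_nonneg hnn
  -- pointwise bound against shifts
  have step : ∀ x, ∀ t ∈ Set.Icc (0:ℝ) 1, h x ≤ (C * Real.exp 1) * h (x - t) := by
    intro x t ht
    have h1 : v x ≤ v (x - t) * C := by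
      calc v x = v (x - t + t) := by ring_nf
        _ ≤ v (x - t) * v t := hsub _ _
        _ ≤ v (x - t) * C := by
            exact mul_le_mul_of_nonneg_left (hC t ht) (hpos _).le
    have h2 : Real.exp (-|x|) ≤ Real.exp 1 * Real.exp (-|x - t|) := by
      rw [← Real.exp_add]
      apply Real.exp_le_exp.2
      have habs : |x| ≥ |x - t| - |t| := by
        have := abs_sub_abs_le_abs_sub (x - t) x
        simp only [sub_sub_cancel_left, abs_neg] at this
        linarith
      have ht1 : |t| ≤ 1 := by
        rw [abs_of_nonneg ht.1]; exact ht.2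
      linarith
    calc h x = Real.exp (-|x|) * v x := rfl
      _ ≤ (Real.exp 1 * Real.exp (-|x - t|)) * (v (x - t) * C) := by
          apply mul_le_mul h2 h1 (hpos x).le
          positivity
      _ = (C * Real.exp 1) * h (x - t) := by simp only [hh]; ring
  -- integrate over t ∈ [0,1]
  have key : ∀ x, h x ≤ (C * Real.exp 1) * I := by
    intro x
    have hint : Integrable (fun t => h (x - t)) volume := hL1.comp_sub_left x
    have hii : IntervalIntegrable (fun t => h (x - t)) volume 0 1 :=
      hint.intervalIntegrable
    have e1 : h x = ∫ t in (0:ℝ)..1, h x := by simp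
    have e2 : (∫ t in (0:ℝ)..1, h x) ≤ ∫ t in (0:ℝ)..1, (C * Real.exp 1) * h (x - t) := by
      apply intervalIntegral.integral_mono_on (by norm_num) intervalIntegrable_const
        (hii.const_mul _)
      intro t ht
      exact step x t ht
    have e3 : (∫ t in (0:ℝ)..1, (C * Real.exp 1) * h (x - t))
        = (C * Real.exp 1) * ∫ t in (0:ℝ)..1, h (x - t) := by
      rw [intervalIntegral.integral_const_mul]
    have e4 : (∫ t in (0:ℝ)..1, h (x - t)) ≤ I := by
      rw [intervalIntegral.integral_comp_sub_left h x, sub_zero]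
      rw [intervalIntegral.integral_of_le (by linarith : x - 1 ≤ x)]
      exact setIntegral_le_integral hL1 (Filter.Eventually.of_forall hnn)
    calc h x = ∫ t in (0:ℝ)..1, h x := e1
      _ ≤ ∫ t in (0:ℝ)..1, (C * Real.exp 1) * h (x - t) := e2
      _ = (C * Real.exp 1) * ∫ t in (0:ℝ)..1, h (x - t) := e3
      _ ≤ (C * Real.exp 1) * I := by
          apply mul_le_mul_of_nonneg_left e4
          positivity
  -- uniform bound, at least 1
  set M : ℝ := max ((C * Real.exp 1) * I) 1 with hM
  have hM1 : (1:ℝ) ≤ M := le_max_right _ _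
  have hbound : ∀ x, |h x| ≤ M := by
    intro x
    rw [abs_of_nonneg (hnn x)]
    exact le_trans (key x) (le_max_left _ _)
  have hmem_top : MemLp h ⊤ volume :=
    memLp_top_of_bound hcont.aestronglyMeasurable M
      (Filter.Eventually.of_forall hbound)
  intro p hp
  rcases eq_or_ne p ⊤ with rfl | hptop
  · exact hmem_top.2
  · -- finite p ≥ 2
    have hp0 : p ≠ 0 := by
      intro h0; rw [h0] at hp; exact absurd hp (by simp)
    rw [eLpNorm_lt_top_iff_lintegral_rpow_enorm_lt_top hp0 hptop]
    set r : ℝ := p.toReal with hr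
    have hr1 : 1 ≤ r := by
      rw [hr, ← ENNReal.toReal_one]
      apply ENNReal.toReal_mono hptop
      exact le_trans (by norm_num) hp
    have hMnn : (0:ℝ) ≤ M := by linarith
    set Me : ℝ≥0∞ := ENNReal.ofReal M with hMe
    have hbdd : ∀ x, (‖h x‖₊ : ℝ≥0∞) ^ r ≤ Me ^ (r - 1) * ‖h x‖₊ := by
      intro x
      have hle : (‖h x‖₊ : ℝ≥0∞) ≤ Me := by
        rw [hMe, ← ENNReal.ofReal_coe_nnreal, coe_nnnorm]
        exact ENNReal.ofReal_le_ofReal (hbound x)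
      have hfin : (‖h x‖₊ : ℝ≥0∞) ≠ ⊤ := coe_ne_top
      calc (‖h x‖₊ : ℝ≥0∞) ^ r = (‖h x‖₊ : ℝ≥0∞) ^ (r - 1) * (‖h x‖₊ : ℝ≥0∞) ^ (1:ℝ) := by
            rw [← ENNReal.rpow_add_of_nonneg _ _ (by linarith) (by norm_num), sub_add_cancel]
        _ ≤ Me ^ (r - 1) * ‖h x‖₊ := by
            rw [ENNReal.rpow_one]
            exact mul_le_mul' (ENNReal.rpow_le_rpow hle (by linarith)) le_rfl
    have hfin1 : (∫⁻ x, (‖h x‖₊ : ℝ≥0∞) ∂volume) < ⊤ := hL1.2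
    calc (∫⁻ x, (‖h x‖₊ : ℝ≥0∞) ^ r ∂volume)
        ≤ ∫⁻ x, Me ^ (r - 1) * ‖h x‖₊ ∂volume := lintegral_mono hbdd
      _ = Me ^ (r - 1) * ∫⁻ x, (‖h x‖₊ : ℝ≥0∞) ∂volume := by
          rw [lintegral_const_mul]
          exact hcont.measurable.nnnorm.coe_nnreal_ennreal
      _ < ⊤ := ENNReal.mul_lt_top (by
            apply ENNReal.rpow_lt_top_of_nonneg (by linarith)
            exact ofReal_ne_top) hfin1
end

section
/- Let h : ℝ → ℝ be nonnegative and integrable with ∫_ℝ e^{|y|} h(y) dy < ∞, and set F(x) := ((∂ₓ p) ∗ h)(x) where p(x) = e^{-|x|}/2. Then for x → +∞, e^{x} F(x) → −λ₊ where λ₊ := (1/2)∫_ℝ e^{y} h(y) dy; that is, F(x) = −e^{-x}(λ₊ + ε₊(x)) with ε₊(x) := (1/2)∫_x^∞ (e^{y} + e^{2x−y}) h(y) dy → 0 as x → ∞. -/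
open MeasureTheory Filter

theorem stmt17 (h : ℝ → ℝ) (hpos : ∀ y, 0 ≤ h y) (hint : Integrable h volume)
    (hexp : Integrable (fun y => Real.exp |y| * h y) volume)
    (F : ℝ → ℝ)
    (hF : F = fun x => -(1 / 2) * ∫ y, Real.sign (x - y) * Real.exp (-|x - y|) * h y)
    (lam : ℝ) (hlam : lam = (1 / 2) * ∫ y, Real.exp y * h y)
    (ε : ℝ → ℝ)
    (hε : ε = fun x => (1 / 2) * ∫ y in Set.Ioi x, (Real.exp y + Real.exp (2 * x - y)) * h y) :
    Tendsto (fun x => Real.exp x * F x) atTop (nhds (-lam)) ∧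
      Tendsto ε atTop (nhds 0) := by
  have hm : AEStronglyMeasurable h volume := hint.1
  have hsign : Measurable Real.sign := by
    have : Real.sign = fun t : ℝ => if t < 0 then (-1 : ℝ) else if 0 < t then 1 else 0 := by
      funext t; rfl
    rw [this]
    exact Measurable.ite (measurableSet_lt measurable_id measurable_const) measurable_const
      (Measurable.ite (measurableSet_lt measurable_const measurable_id) measurable_const
        measurable_const)
  have hg_nonneg : ∀ y, 0 ≤ Real.exp |y| * h y := fun y =>
    mul_nonneg (Real.exp_pos _).le (hpos y)
  -- e^y * h y is integrable
  have I1 : Integrable (fun y => Real.exp y * h y) volume := by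
    refine hexp.mono (Real.measurable_exp.aestronglyMeasurable.mul hm) ?_
    filter_upwards with y
    rw [Real.norm_eq_abs, Real.norm_eq_abs,
      abs_of_nonneg (mul_nonneg (Real.exp_pos _).le (hpos y)),
      abs_of_nonneg (hg_nonneg y)]
    exact mul_le_mul_of_nonneg_right (Real.exp_le_exp.2 (le_abs_self y)) (hpos y)
  -- e^(2x-y) * h y integrable on Ioi x
  have I2 : ∀ x : ℝ, IntegrableOn (fun y => Real.exp (2 * x - y) * h y) (Set.Ioi x) volume := by
    intro x
    refine (I1.restrict (s := Set.Ioi x)).mono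
      (((measurable_const.sub measurable_id).exp).aestronglyMeasurable.mul
        (hm.restrict)) ?_
    rw [ae_restrict_iff' measurableSet_Ioi]
    filter_upwards with y hy
    rw [Real.norm_eq_abs, Real.norm_eq_abs,
      abs_of_nonneg (mul_nonneg (Real.exp_pos _).le (hpos y)),
      abs_of_nonneg (mul_nonneg (Real.exp_pos _).le (hpos y))]
    have : 2 * x - y ≤ y := by
      have := (Set.mem_Ioi.mp hy).le
      linarith [Set.mem_Ioi.mp hy]
    exact mul_le_mul_of_nonneg_right (Real.exp_le_exp.2 this) (hpos y)
  -- tail integral of e^|y| h y tends to 0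
  have hA : Tendsto (fun x => ∫ y in Set.Ioi x, Real.exp |y| * h y) atTop (nhds 0) := by
    have key : Tendsto (fun x : ℝ => ∫ y, (Set.Ioi x).indicator
        (fun y => Real.exp |y| * h y) y) atTop (nhds (∫ _ : ℝ, (0 : ℝ))) := by
      apply tendsto_integral_filter_of_dominated_convergence
        (fun y => Real.exp |y| * h y)
      · filter_upwards with x
        exact hexp.1.indicator measurableSet_Ioi
      · filter_upwards with x
        filter_upwards with y
        rw [Real.norm_eq_abs]
        by_cases hy : y ∈ Set.Ioi x
        · rw [Set.indicator_of_mem hy, abs_of_nonneg (hg_nonneg y)]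
        · rw [Set.indicator_of_notMem hy]
          simpa using hg_nonneg y
      · exact hexp
      · filter_upwards with y
        have hev : ∀ᶠ x : ℝ in atTop, (Set.Ioi x).indicator
            (fun y => Real.exp |y| * h y) y = 0 := by
          filter_upwards [eventually_ge_atTop y] with x hx
          exact Set.indicator_of_notMem (by simpa using hx) _
        exact tendsto_const_nhds.congr' (hev.mono fun x hx => hx.symm)
    simp only [integral_indicator measurableSet_Ioi] at key
    simpa using key
  -- ε bounds
  have hεbound : ∀ x, ε x ≤ ∫ y in Set.Ioi x, Real.exp |y| * h y := by
    intro x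
    rw [hε]
    have hle : ∫ y in Set.Ioi x, (Real.exp y + Real.exp (2 * x - y)) * h y
        ≤ ∫ y in Set.Ioi x, 2 * (Real.exp |y| * h y) := by
      refine setIntegral_mono_on ?_ ((hexp.restrict).const_mul 2) measurableSet_Ioi ?_
      · have : IntegrableOn (fun y => Real.exp y * h y + Real.exp (2 * x - y) * h y)
            (Set.Ioi x) volume := (I1.restrict).add (I2 x)
        refine this.congr_fun (fun y _ => by ring) measurableSet_Ioi
      · intro y hy
        have h1 : Real.exp y ≤ Real.exp |y| := Real.exp_le_exp.2 (le_abs_self y)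
        have h2 : Real.exp (2 * x - y) ≤ Real.exp |y| := by
          refine Real.exp_le_exp.2 ?_
          have := Set.mem_Ioi.mp hy
          have : 2 * x - y ≤ y := by linarith
          exact this.trans (le_abs_self y)
        calc (Real.exp y + Real.exp (2 * x - y)) * h y
            ≤ (Real.exp |y| + Real.exp |y|) * h y :=
              mul_le_mul_of_nonneg_right (add_le_add h1 h2) (hpos y)
          _ = 2 * (Real.exp |y| * h y) := by ring
    rw [integral_const_mul] at hle
    linarith
  have hεnonneg : ∀ x, 0 ≤ ε x := by
    intro x
    rw [hε]
    have : 0 ≤ ∫ y in Set.Ioi x, (Real.exp y + Real.exp (2 * x - y)) * h y :=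
      setIntegral_nonneg measurableSet_Ioi fun y _ =>
        mul_nonneg (by positivity) (hpos y)
    linarith
  have hεtend : Tendsto ε atTop (nhds 0) :=
    tendsto_of_tendsto_of_tendsto_of_le_of_le tendsto_const_nhds hA
      (fun x => hεnonneg x) (fun x => hεbound x)
  refine ⟨?_, hεtend⟩
  -- key identity: e^x * F x = -lam + ε x
  have key : ∀ x : ℝ, Real.exp x * F x = -lam + ε x := by
    intro x
    have If : Integrable (fun y => Real.sign (x - y) * Real.exp (-|x - y|) * h y) volume := by
      refine hint.mono (((hsign.comp (measurable_const.sub measurable_id)).mul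
        ((measurable_const.sub measurable_id).abs.neg.exp)).aestronglyMeasurable.mul hm) ?_
      filter_upwards with y
      rw [Real.norm_eq_abs, Real.norm_eq_abs, abs_mul, abs_mul]
      have hs1 : |Real.sign (x - y)| ≤ 1 := by
        rcases lt_trichotomy (x - y) 0 with hc | hc | hc
        · rw [Real.sign_of_neg hc]; norm_num
        · rw [hc, Real.sign_zero]; norm_num
        · rw [Real.sign_of_pos hc]; norm_num
      have hs2 : |Real.exp (-|x - y|)| ≤ 1 := by
        rw [abs_of_nonneg (Real.exp_pos _).le]
        exact Real.exp_le_one_iff.2 (neg_nonpos.2 (abs_nonneg _))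
      calc |Real.sign (x - y)| * |Real.exp (-|x - y|)| * |h y|
          ≤ 1 * 1 * |h y| := by
            apply mul_le_mul_of_nonneg_right _ (abs_nonneg _)
            exact mul_le_mul hs1 hs2 (abs_nonneg _) zero_le_one
        _ = |h y| := by ring
    have hsplit : (∫ y in Set.Iic x, Real.sign (x - y) * Real.exp (-|x - y|) * h y)
        + (∫ y in Set.Ioi x, Real.sign (x - y) * Real.exp (-|x - y|) * h y)
        = ∫ y, Real.sign (x - y) * Real.exp (-|x - y|) * h y :=
      intervalIntegral.integral_Iic_add_Ioi If.integrableOn If.integrableOn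
    have hne : ∀ᵐ y : ℝ, y ≠ x := by
      rw [ae_iff]
      have : {y : ℝ | ¬y ≠ x} = {x} := by ext y; simp [eq_comm]
      rw [this]
      exact measure_singleton x
    have hIic : (∫ y in Set.Iic x, Real.sign (x - y) * Real.exp (-|x - y|) * h y)
        = Real.exp (-x) * ∫ y in Set.Iic x, Real.exp y * h y := by
      rw [← integral_const_mul]
      refine setIntegral_congr_ae measurableSet_Iic ?_
      filter_upwards [hne] with y hy hyx
      have hlt : y < x := lt_of_le_of_ne hyx hy
      have hpos' : 0 < x - y := sub_pos.2 hlt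
      rw [Real.sign_of_pos hpos', abs_of_pos hpos']
      rw [show -(x - y) = y + -x by ring, Real.exp_add]
      ring
    have hIoi : (∫ y in Set.Ioi x, Real.sign (x - y) * Real.exp (-|x - y|) * h y)
        = -(Real.exp (-x) * ∫ y in Set.Ioi x, Real.exp (2 * x - y) * h y) := by
      rw [← integral_const_mul, ← integral_neg]
      refine setIntegral_congr_fun measurableSet_Ioi ?_
      intro y hy
      have hlt : x < y := Set.mem_Ioi.mp hy
      have hneg : x - y < 0 := sub_neg.2 hlt
      show Real.sign (x - y) * Real.exp (-|x - y|) * h y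
          = -(Real.exp (-x) * (Real.exp (2 * x - y) * h y))
      rw [Real.sign_of_neg hneg, abs_of_neg hneg]
      rw [show -(-(x - y)) = -x + (2 * x - y) by ring, Real.exp_add]
      ring
    have hIic2 : (∫ y in Set.Iic x, Real.exp y * h y)
        = (∫ y, Real.exp y * h y) - ∫ y in Set.Ioi x, Real.exp y * h y := by
      have := intervalIntegral.integral_Iic_add_Ioi (b := x) I1.integrableOn I1.integrableOn
      linarith
    have hεval : ε x = (1 / 2) * ((∫ y in Set.Ioi x, Real.exp y * h y)
        + ∫ y in Set.Ioi x, Real.exp (2 * x - y) * h y) := by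
      simp only [hε]
      congr 1
      rw [← integral_add I1.integrableOn (I2 x)]
      exact setIntegral_congr_fun measurableSet_Ioi fun y _ => by
        show (Real.exp y + Real.exp (2 * x - y)) * h y
            = Real.exp y * h y + Real.exp (2 * x - y) * h y
        ring
    simp only [hF]
    rw [← hsplit, hIic, hIoi, hIic2, hεval, hlam, Real.exp_neg]
    field_simp
    ring
  have : Tendsto (fun x => -lam + ε x) atTop (nhds (-lam + 0)) :=
    tendsto_const_nhds.add hεtend
  rw [add_zero] at this
  exact this.congr fun x => (key x).symm
end
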